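/- Let u be a cubic polynomial (i.e., u⁗ ≡ 0) on [a,b] with u'(a) = u(b) = u''(b) = 0 and u not identically zero. Then u has no zero in [a,b); in particular u is of constant sign on [a,b). -/

import Mathlib

open Set

/-- A nontrivial cubic polynomial `u` with `u'(a) = u(b) = u''(b) = 0` has no zero in
`[a,b)`; in particular it is of constant sign on `[a,b)`. -/
theorem stmt15 (a b : ℝ) (hab : a < b) (c0 c1 c2 c3 : ℝ) (u : ℝ → ℝ)
    (hu : ∀ t, u t = c0 + c1 * t + c2 * t^2 + c3 * t^3)
    (h1a : deriv u a = 0) (hb : u b = 0) (h2b : deriv (deriv u) b = 0)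
    (hne : ¬∀ t, u t = 0) :
    (∀ t ∈ Ico a b, u t ≠ 0) ∧
    ((∀ t ∈ Ico a b, 0 < u t) ∨ (∀ t ∈ Ico a b, u t < 0)) := by
  have hufun : u = fun t => c0 + c1 * t + c2 * t^2 + c3 * t^3 := funext hu
  have hderiv : deriv u = fun t => c1 + 2*c2*t + 3*c3*t^2 := by
    funext t
    have h : HasDerivAt (fun t : ℝ => c0 + c1 * t + c2 * t^2 + c3 * t^3)
        (c1 + 2*c2*t + 3*c3*t^2) t := by
      have h1 := (hasDerivAt_id t).const_mul c1
      have h2 := (hasDerivAt_pow 2 t).const_mul c2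
      have h3 := (hasDerivAt_pow 3 t).const_mul c3
      have h4 := (((hasDerivAt_const t c0).add h1).add h2).add h3
      refine h4.congr_deriv ?_
      push_cast; ring
    rw [hufun]
    exact h.deriv
  have hderiv2 : deriv (deriv u) = fun t => 2*c2 + 6*c3*t := by
    funext t
    have h : HasDerivAt (fun t : ℝ => c1 + 2*c2*t + 3*c3*t^2)
        (2*c2 + 6*c3*t) t := by
      have h1 := (hasDerivAt_id t).const_mul (2*c2)
      have h2 := (hasDerivAt_pow 2 t).const_mul (3*c3)
      have h4 := ((hasDerivAt_const t c1).add h1).add h2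
      refine h4.congr_deriv ?_
      push_cast; ring
    rw [hderiv]
    exact h.deriv
  have e2 : 2*c2 + 6*c3*b = 0 := by rw [hderiv2] at h2b; exact h2b
  have e1 : c1 + 2*c2*a + 3*c3*a^2 = 0 := by
    rw [hderiv] at h1a; exact h1a
  have e0 : c0 + c1*b + c2*b^2 + c3*b^3 = 0 := by
    rw [hu b] at hb; linarith [hb]
  have key : ∀ t, u t = c3 * ((t - b) * (t^2 - 2*b*t + (6*a*b - 3*a^2 - 2*b^2))) := by
    intro t
    rw [hu t]
    linear_combination e0 + (t - b) * e1 + ((t - b)*(t + b - 2*a)/2) * e2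
  have hc3 : c3 ≠ 0 := by
    intro h
    apply hne
    intro t
    have hc2 : c2 = 0 := by rw [h] at e2; linarith
    have hc1 : c1 = 0 := by rw [h, hc2] at e1; linarith
    have hc0 : c0 = 0 := by rw [h, hc2, hc1] at e0; linarith
    rw [hu t, h, hc2, hc1, hc0]; ring
  have hpos : ∀ t ∈ Ico a b, 0 < (t - b) * (t^2 - 2*b*t + (6*a*b - 3*a^2 - 2*b^2)) := by
    rintro t ⟨hta, htb⟩
    have h1 : t - b < 0 := by linarith
    have h2 : t^2 - 2*b*t + (6*a*b - 3*a^2 - 2*b^2) < 0 := by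
      nlinarith [sq_nonneg (t - a), sq_nonneg (a - b), mul_pos (sub_pos.2 hab) (sub_pos.2 hab)]
    exact mul_pos_of_neg_of_neg h1 h2
  have hmain : (∀ t ∈ Ico a b, 0 < u t) ∨ (∀ t ∈ Ico a b, u t < 0) := by
    rcases hc3.lt_or_gt with hneg | hposc
    · right
      intro t ht
      rw [key t]
      exact mul_neg_of_neg_of_pos hneg (hpos t ht)
    · left
      intro t ht
      rw [key t]
      exact mul_pos hposc (hpos t ht)
  refine ⟨?_, hmain⟩
  intro t ht
  rcases hmain with h | h
  · exact (h t ht).ne'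
  · exact (h t ht).ne
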